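/- Let (X,d) be a metric space, μ a probability measure on X, and define the average descent modulus ℳ[f](x) = ∫_X Δ⁺f(x,y) μ(dy) where Δ⁺f(x,y) = (f(x)−f(y))⁺/d(x,y) for y ≠ x and 0 for y = x. Fix ρ > 0. If f, g are μ-measurable, x ∈ dom g, δ > 0 and ℳ[f](x) < δ < ℳ[g](x), then there exists z ∈ dom g with (f(x)−f(z))⁺ < (1+ρ)(g(x)−g(z))⁺ and g(x) − g(z) > (ρ/(1+ρ))·δ·d(x,z). -/

import Mathlib

open MeasureTheory
open scoped ENNReal

/-- The average descent modulus `ℳ[f](x) = ∫ Δ⁺f(x,y) μ(dy)` for `x ∈ dom f`,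
`+∞` otherwise, where `Δ⁺f(x,y) = (f(x)−f(y))⁺/d(x,y)` (and `0` when `y = x`). -/
noncomputable def avgDescent {X : Type*} [MetricSpace X] [MeasurableSpace X]
    (μ : Measure X) (f : X → EReal) (x : X) : ℝ≥0∞ :=
  if f x = ⊤ then ⊤
  else ∫⁻ y, ENNReal.ofReal ((max (f x - f y) 0).toReal / dist x y) ∂μ

private lemma coe_max' (a b : ℝ) : ((max a b : ℝ):EReal) = max ↑a ↑b := by
  rcases le_total a b with h|h <;> simp [max_eq_right, max_eq_left, h, EReal.coe_le_coe_iff]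

/-- Metric compatibility of the average descent modulus with
`θ_ρ(δ) = ρδ/(1+ρ)`. -/
theorem stmt12 {X : Type*} [MetricSpace X] [MeasurableSpace X]
    (μ : Measure X) [IsProbabilityMeasure μ]
    (f g : X → EReal) (hfm : Measurable f) (hgm : Measurable g)
    (hfbot : ∀ y, f y ≠ ⊥) (hgbot : ∀ y, g y ≠ ⊥)
    (hfproper : ∃ y, f y ≠ ⊤) (hgproper : ∃ y, g y ≠ ⊤)
    (ρ : ℝ) (hρ : 0 < ρ) (x : X) (hx : g x ≠ ⊤) (δ : ℝ) (hδ : 0 < δ)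
    (hlt : avgDescent μ f x < ENNReal.ofReal δ)
    (hgt : ENNReal.ofReal δ < avgDescent μ g x) :
    ∃ z, g z ≠ ⊤ ∧
      max (f x - f z) 0 < ((1 + ρ : ℝ) : EReal) * max (g x - g z) 0 ∧
      ((ρ / (1 + ρ) * δ * dist x z : ℝ) : EReal) < g x - g z := by
  by_contra H
  push_neg at H
  have hfx : f x ≠ ⊤ := by
    intro h
    simp only [avgDescent, if_pos h] at hlt
    exact not_top_lt hlt
  have h1ρ : (0:ℝ) < 1 + ρ := by linarith
  set c : ℝ≥0∞ := ENNReal.ofReal (1/(1+ρ)) with hc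
  set k : ℝ≥0∞ := ENNReal.ofReal (ρ/(1+ρ)*δ) with hk
  have hfxr : f x = ((f x).toReal : EReal) := (EReal.coe_toReal hfx (hfbot x)).symm
  have hgxr : g x = ((g x).toReal : EReal) := (EReal.coe_toReal hx (hgbot x)).symm
  have key : ∀ z, ENNReal.ofReal ((max (g x - g z) 0).toReal / dist x z)
      ≤ c * ENNReal.ofReal ((max (f x - f z) 0).toReal / dist x z) + k := by
    intro z
    rcases eq_or_ne (g z) ⊤ with hz | hz
    · have hb : g x - g z = ⊥ := by rw [hz]; simp
      simp [hb]
    · have hgzr : g z = ((g z).toReal : EReal) := (EReal.coe_toReal hz (hgbot z)).symm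
      have hsubg : g x - g z = (((g x).toReal - (g z).toReal : ℝ) : EReal) := by
        rw [hgxr, hgzr]; exact (EReal.coe_sub _ _).symm
      have hmaxg : max (g x - g z) 0 = ((max ((g x).toReal - (g z).toReal) 0 : ℝ) : EReal) := by
        rw [hsubg, coe_max']; norm_num
      set Δg : ℝ := max ((g x).toReal - (g z).toReal) 0 with hΔg
      have hΔg0 : 0 ≤ Δg := le_max_right _ _
      have hd0 : (0:ℝ) ≤ dist x z := dist_nonneg
      by_cases hB : max (f x - f z) 0 < ((1 + ρ : ℝ) : EReal) * max (g x - g z) 0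
      · have hC := H z hz hB
        rw [hsubg, EReal.coe_le_coe_iff] at hC
        have hC2 : Δg ≤ ρ/(1+ρ)*δ*dist x z := max_le hC (by positivity)
        have hdiv : Δg / dist x z ≤ ρ/(1+ρ)*δ := by
          rcases eq_or_lt_of_le hd0 with hd | hd
          · rw [← hd]; simp; positivity
          · rw [div_le_iff₀ hd]; exact hC2
        rw [hmaxg, EReal.toReal_coe]
        calc ENNReal.ofReal (Δg / dist x z) ≤ k := ENNReal.ofReal_le_ofReal hdiv
          _ ≤ _ := le_add_self
      · push_neg at hB
        rw [hmaxg] at hB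
        rcases eq_or_ne (f z) ⊤ with hfz | hfz
        · have hbf : f x - f z = ⊥ := by rw [hfz]; simp
          rw [hbf] at hB
          have hB' : ((1+ρ)*Δg : ℝ) ≤ (0:ℝ) := by
            rw [← EReal.coe_le_coe_iff]
            push_cast
            simpa using hB
          have : Δg = 0 := le_antisymm (by nlinarith) hΔg0
          rw [hmaxg, EReal.toReal_coe, this]
          simp
        · have hfzr : f z = ((f z).toReal : EReal) := (EReal.coe_toReal hfz (hfbot z)).symm
          have hsubf : f x - f z = (((f x).toReal - (f z).toReal : ℝ) : EReal) := by
            rw [hfxr, hfzr]; exact (EReal.coe_sub _ _).symm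
          have hmaxf : max (f x - f z) 0
              = ((max ((f x).toReal - (f z).toReal) 0 : ℝ) : EReal) := by
            rw [hsubf, coe_max']; norm_num
          set Δf : ℝ := max ((f x).toReal - (f z).toReal) 0 with hΔf
          have hΔf0 : 0 ≤ Δf := le_max_right _ _
          rw [hmaxf] at hB
          have hB' : (1+ρ)*Δg ≤ Δf := by
            rw [← EReal.coe_le_coe_iff]
            push_cast
            simpa using hB
          have hdiv : Δg / dist x z ≤ 1/(1+ρ) * (Δf / dist x z) := by
            rcases eq_or_lt_of_le hd0 with hd | hd
            · rw [← hd]; simp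
            · have h1 : Δg ≤ Δf/(1+ρ) := by rw [le_div_iff₀ h1ρ]; linarith
              have h2 : Δg / dist x z ≤ (Δf/(1+ρ)) / dist x z :=
                div_le_div_of_nonneg_right h1 hd.le
              calc Δg / dist x z ≤ (Δf/(1+ρ)) / dist x z := h2
                _ = 1/(1+ρ) * (Δf / dist x z) := by ring
          rw [hmaxg, hmaxf, EReal.toReal_coe, EReal.toReal_coe]
          calc ENNReal.ofReal (Δg / dist x z)
              ≤ ENNReal.ofReal (1/(1+ρ) * (Δf / dist x z)) :=
                ENNReal.ofReal_le_ofReal hdiv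
            _ = c * ENNReal.ofReal (Δf / dist x z) := by
                rw [hc, ENNReal.ofReal_mul (by positivity)]
            _ ≤ _ := le_self_add
  have hGa : avgDescent μ g x
      = ∫⁻ z, ENNReal.ofReal ((max (g x - g z) 0).toReal / dist x z) ∂μ := by
    simp only [avgDescent, if_neg hx]
  have hFa : avgDescent μ f x
      = ∫⁻ z, ENNReal.ofReal ((max (f x - f z) 0).toReal / dist x z) ∂μ := by
    simp only [avgDescent, if_neg hfx]
  have hint : avgDescent μ g x ≤ c * avgDescent μ f x + k := by
    rw [hGa, hFa]
    calc (∫⁻ z, ENNReal.ofReal ((max (g x - g z) 0).toReal / dist x z) ∂μ)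
        ≤ ∫⁻ z, c * ENNReal.ofReal ((max (f x - f z) 0).toReal / dist x z) + k ∂μ :=
          lintegral_mono key
      _ = c * (∫⁻ z, ENNReal.ofReal ((max (f x - f z) 0).toReal / dist x z) ∂μ) + k := by
          rw [lintegral_add_right _ measurable_const, lintegral_const_mul' c _
            ENNReal.ofReal_ne_top, lintegral_const]
          simp [measure_univ]
  have hc0 : c ≠ 0 := by
    rw [hc]
    simp only [ne_eq, ENNReal.ofReal_eq_zero, not_le]
    positivity
  have h2 : c * avgDescent μ f x + k < c * ENNReal.ofReal δ + k :=
    ENNReal.add_lt_add_right (by simp [hk]) ((ENNReal.mul_lt_mul_iff_right hc0 ENNReal.ofReal_ne_top).2 hlt)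
  have h3 : c * ENNReal.ofReal δ + k = ENNReal.ofReal δ := by
    rw [hc, hk, ← ENNReal.ofReal_mul (by positivity),
      ← ENNReal.ofReal_add (by positivity) (by positivity)]
    congr 1
    field_simp
  have := (hgt.trans_le hint).trans h2
  rw [h3] at this
  exact lt_irrefl _ this
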